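/- Determinant formula for the integral 2-inner product: for real-valued functions f, g, h with φ·f², φ·g², φ·h² integrable on a measure space (Ω, Σ, μ) and φ : Ω → [0,∞) measurable, one has (1/2)∫∫ φ(x)φ(y)·det[[f(x),f(y)],[h(x),h(y)]]·det[[g(x),g(y)],[h(x),h(y)]] dμ(x)dμ(y) = det[[∫φfg dμ, ∫φfh dμ],[∫φgh dμ, ∫φh² dμ]]. -/

import Mathlib

open MeasureTheory

lemma prod_int {Ω : Type} [MeasurableSpace Ω] {μ : Measure Ω}
    {φ u v : Ω → ℝ} (hφm : Measurable φ) (hφ : ∀ x, 0 ≤ φ x)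
    (hu : Measurable u) (hv : Measurable v)
    (hu2 : Integrable (fun x => φ x * u x ^ 2) μ)
    (hv2 : Integrable (fun x => φ x * v x ^ 2) μ) :
    Integrable (fun x => φ x * (u x * v x)) μ := by
  apply Integrable.mono' ((hu2.add hv2).const_mul (1/2))
    (hφm.mul (hu.mul hv)).aestronglyMeasurable
  filter_upwards with x
  simp only [Real.norm_eq_abs, Pi.add_apply, Pi.mul_apply]
  rw [abs_mul, abs_of_nonneg (hφ x)]
  have h1 : |u x * v x| ≤ (u x ^ 2 + v x ^ 2) / 2 := by
    rcases abs_cases (u x * v x) with ⟨heq, _⟩ | ⟨heq, _⟩ <;> rw [heq] <;>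
      nlinarith [sq_nonneg (u x - v x), sq_nonneg (u x + v x)]
  have := mul_le_mul_of_nonneg_left h1 (hφ x)
  linarith

theorem stmt {Ω : Type} [MeasurableSpace Ω] (μ : Measure Ω)
    (φ f g h : Ω → ℝ) (hφm : Measurable φ) (hφ : ∀ x, 0 ≤ φ x)
    (hf : Measurable f) (hg : Measurable g) (hh : Measurable h)
    (hf2 : Integrable (fun x => φ x * f x ^ 2) μ)
    (hg2 : Integrable (fun x => φ x * g x ^ 2) μ)
    (hh2 : Integrable (fun x => φ x * h x ^ 2) μ) :
    (1/2) * ∫ x, (∫ y, φ x * φ y * ((f x * h y - f y * h x) * (g x * h y - g y * h x)) ∂μ) ∂μ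
      = (∫ x, φ x * (f x * g x) ∂μ) * (∫ x, φ x * h x ^ 2 ∂μ)
        - (∫ x, φ x * (f x * h x) ∂μ) * (∫ x, φ x * (g x * h x) ∂μ) := by
  have Ifg : Integrable (fun x => φ x * (f x * g x)) μ := prod_int hφm hφ hf hg hf2 hg2
  have Ifh : Integrable (fun x => φ x * (f x * h x)) μ := prod_int hφm hφ hf hh hf2 hh2
  have Igh : Integrable (fun x => φ x * (g x * h x)) μ := prod_int hφm hφ hg hh hg2 hh2
  set A := ∫ x, φ x * (f x * g x) ∂μ with hA
  set B := ∫ x, φ x * (f x * h x) ∂μ with hB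
  set C := ∫ x, φ x * (g x * h x) ∂μ with hC
  set D := ∫ x, φ x * h x ^ 2 ∂μ with hD
  have key : ∀ x, (∫ y, φ x * φ y * ((f x * h y - f y * h x) * (g x * h y - g y * h x)) ∂μ)
      = φ x * (f x * g x) * D - φ x * (f x * h x) * C - φ x * (g x * h x) * B
        + φ x * h x ^ 2 * A := by
    intro x
    have e : (fun y => φ x * φ y * ((f x * h y - f y * h x) * (g x * h y - g y * h x)))
        = fun y => (φ x * (f x * g x)) * (φ y * h y ^ 2)
          - (φ x * (f x * h x)) * (φ y * (g y * h y))
          - (φ x * (g x * h x)) * (φ y * (f y * h y))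
          + (φ x * h x ^ 2) * (φ y * (f y * g y)) := by
      funext y; ring
    have i1 : Integrable (fun y => (φ x * (f x * g x)) * (φ y * h y ^ 2)) μ := hh2.const_mul _
    have i2 : Integrable (fun y => (φ x * (f x * h x)) * (φ y * (g y * h y))) μ :=
      Igh.const_mul _
    have i3 : Integrable (fun y => (φ x * (g x * h x)) * (φ y * (f y * h y))) μ :=
      Ifh.const_mul _
    have i4 : Integrable (fun y => (φ x * h x ^ 2) * (φ y * (f y * g y))) μ := Ifg.const_mul _
    have i12 : Integrable (fun y => (φ x * (f x * g x)) * (φ y * h y ^ 2)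
        - (φ x * (f x * h x)) * (φ y * (g y * h y))) μ := i1.sub i2
    have i123 : Integrable (fun y => (φ x * (f x * g x)) * (φ y * h y ^ 2)
        - (φ x * (f x * h x)) * (φ y * (g y * h y))
        - (φ x * (g x * h x)) * (φ y * (f y * h y))) μ := i12.sub i3
    rw [e, integral_add i123 i4, integral_sub i12 i3, integral_sub i1 i2,
      integral_const_mul, integral_const_mul, integral_const_mul, integral_const_mul]
  have j1 : Integrable (fun x => φ x * (f x * g x) * D) μ := Ifg.mul_const _
  have j2 : Integrable (fun x => φ x * (f x * h x) * C) μ := Ifh.mul_const _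
  have j3 : Integrable (fun x => φ x * (g x * h x) * B) μ := Igh.mul_const _
  have j4 : Integrable (fun x => φ x * h x ^ 2 * A) μ := hh2.mul_const _
  have j12 : Integrable (fun x => φ x * (f x * g x) * D - φ x * (f x * h x) * C) μ := j1.sub j2
  have j123 : Integrable (fun x => φ x * (f x * g x) * D - φ x * (f x * h x) * C
      - φ x * (g x * h x) * B) μ := j12.sub j3
  have outer : (∫ x, (∫ y, φ x * φ y *
      ((f x * h y - f y * h x) * (g x * h y - g y * h x)) ∂μ) ∂μ)
      = A * D - B * C - C * B + D * A := by
    rw [show (fun x => ∫ y, φ x * φ y *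
        ((f x * h y - f y * h x) * (g x * h y - g y * h x)) ∂μ)
      = fun x => φ x * (f x * g x) * D - φ x * (f x * h x) * C - φ x * (g x * h x) * B
        + φ x * h x ^ 2 * A from funext key]
    rw [integral_add j123 j4, integral_sub j12 j3, integral_sub j1 j2,
      integral_mul_const, integral_mul_const, integral_mul_const, integral_mul_const]
  rw [outer]; ring
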